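/- Let f be a transcendental entire function on ℂ and let P and Q be polynomials such that P − Q is nonconstant. Then the entire functions f + P and f + Q are algebraically independent over ℂ. -/

import Mathlib

open MeasureTheory Filter Asymptotics

/-- `log⁺ x = max (log x) 0`. -/
noncomputable def logPlus (x : ℝ) : ℝ := max (Real.log x) 0

/-- The Nevanlinna proximity function `m(r, f)`. -/
noncomputable def proximity (f : ℂ → ℂ) (r : ℝ) : ℝ :=
  (1 / (2 * Real.pi)) *
    ∫ θ in (0:ℝ)..(2 * Real.pi), logPlus ‖f ((r : ℂ) * Complex.exp ((θ : ℂ) * Complex.I))‖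

/-- The normalized spherical area `A(t)` covered by `f` over the disc of radius `t`. -/
noncomputable def sphericalArea (f : ℂ → ℂ) (t : ℝ) : ℝ :=
  (1 / Real.pi) * ∫ z in Metric.ball (0 : ℂ) t, ‖deriv f z‖ ^ 2 / (1 + ‖f z‖ ^ 2) ^ 2

/-- The (Ahlfors–Shimizu) Nevanlinna characteristic function `T(r, f)`; it agrees with the
classical Nevanlinna characteristic up to a bounded term. -/
noncomputable def nevT (f : ℂ → ℂ) (r : ℝ) : ℝ :=
  ∫ t in (0:ℝ)..r, sphericalArea f t / t

/-- `SmallO A B` means `A(r) = o(B(r))` as `r → ∞` outside a possible exceptional set of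
finite Lebesgue measure; `SmallO A (nevT f)` is the meaning of `A(r) = S(r, f)`. -/
def SmallO (A B : ℝ → ℝ) : Prop :=
  ∃ E : Set ℝ, MeasurableSet E ∧ volume E < ⊤ ∧
    ∀ ε : ℝ, 0 < ε → ∀ᶠ r in atTop, r ∉ E → |A r| ≤ ε * B r

/-- The order `ρ(f) = limsup_{r→∞} log T(r,f) / log r`, as an extended real. -/
noncomputable def nevOrder (f : ℂ → ℂ) : EReal :=
  Filter.limsup (fun r : ℝ => ((Real.log (nevT f r) / Real.log r : ℝ) : EReal)) Filter.atTop

/-- The Nevanlinna deficiency `δ(0, f) = liminf_{r→∞} m(r, 1/f) / T(r, f)`. -/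
noncomputable def deficiency0 (f : ℂ → ℂ) : ℝ :=
  Filter.liminf (fun r : ℝ => proximity (fun z => (f z)⁻¹) r / nevT f r) Filter.atTop

/-- A family of functions `ℂ → ℂ` is algebraically independent over `ℂ` if no nonzero
polynomial with constant coefficients annihilates it. -/
def AlgIndepFns {σ : Type} (g : σ → ℂ → ℂ) : Prop :=
  ∀ P : MvPolynomial σ ℂ, (∀ z, MvPolynomial.eval (fun i => g i z) P = 0) → P = 0

/-- A transcendental entire function: entire and not a polynomial. -/
def TranscEntire (f : ℂ → ℂ) : Prop :=
  Differentiable ℂ f ∧ ¬ ∃ p : Polynomial ℂ, ∀ z, f z = p.eval z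

/-- `f` is a rational function (away from the zeros of the denominator). -/
def IsRationalFn (f : ℂ → ℂ) : Prop :=
  ∃ p q : Polynomial ℂ, q ≠ 0 ∧ ∀ z, q.eval z ≠ 0 → f z = p.eval z / q.eval z

/-- A transcendental meromorphic function on `ℂ`: meromorphic and not rational. -/
def TranscMeromorphic (f : ℂ → ℂ) : Prop :=
  MeromorphicOn f Set.univ ∧ ¬ IsRationalFn f

section StmtAux
open Polynomial Real
set_option maxHeartbeats 1000000
set_option maxRecDepth 8000

lemma aux_upper (q : Polynomial ℂ) {M : ℕ} (hM : q.natDegree ≤ M) {z : ℂ} (hz : 1 ≤ ‖z‖) :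
    ‖q.eval z‖ ≤ (∑ i ∈ Finset.range (M + 1), ‖q.coeff i‖) * ‖z‖ ^ M := by
  rw [Polynomial.eval_eq_sum_range' (Nat.lt_succ_of_le hM)]
  calc ‖∑ i ∈ Finset.range (M+1), q.coeff i * z ^ i‖
      ≤ ∑ i ∈ Finset.range (M+1), ‖q.coeff i * z ^ i‖ := norm_sum_le _ _
    _ ≤ ∑ i ∈ Finset.range (M+1), ‖q.coeff i‖ * ‖z‖ ^ M := by
        apply Finset.sum_le_sum; intro i hi
        rw [norm_mul, norm_pow]
        exact mul_le_mul_of_nonneg_left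
          (pow_le_pow_right₀ hz (Nat.lt_succ_iff.mp (Finset.mem_range.mp hi))) (norm_nonneg _)
    _ = _ := by rw [← Finset.sum_mul]

lemma aux_lower (a : Polynomial ℂ) (ha : a ≠ 0) :
    ∃ c R₁ : ℝ, 0 < c ∧ ∀ z : ℂ, R₁ ≤ ‖z‖ → c ≤ ‖a.eval z‖ := by
  rcases le_or_gt a.degree 0 with h | h
  · obtain ⟨k, rfl⟩ : ∃ k, a = Polynomial.C k := ⟨a.coeff 0, Polynomial.eq_C_of_degree_le_zero h⟩
    refine ⟨‖k‖, 0, ?_, ?_⟩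
    · simpa using fun hk => ha (by rw [hk, map_zero])
    · intro z _; simp
  · have ht : Tendsto (fun z : ℂ => ‖a.eval z‖) (Bornology.cobounded ℂ) atTop :=
      Polynomial.tendsto_norm_atTop a h (z := fun z : ℂ => z) tendsto_norm_cobounded_atTop
    have h2 : ∀ᶠ z : ℂ in Bornology.cobounded ℂ, 1 ≤ ‖a.eval z‖ :=
      ht.eventually (eventually_ge_atTop 1)
    rw [← comap_norm_atTop, Filter.eventually_comap] at h2
    rcases Filter.eventually_atTop.mp h2 with ⟨R₁, hR₁⟩
    exact ⟨1, R₁, one_pos, fun z hz => hR₁ ‖z‖ hz z rfl⟩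


lemma entire_poly_growth {f : ℂ → ℂ} (hf : Differentiable ℂ f) (C R₀ : ℝ) (M : ℕ)
    (hb : ∀ z : ℂ, R₀ ≤ ‖z‖ → ‖f z‖ ≤ C * ‖z‖ ^ M) :
    ∃ p : Polynomial ℂ, ∀ z, f z = p.eval z := by
  set q := cauchyPowerSeries f 0 ((1:NNReal):ℝ) with hqdef
  have H1 : HasFPowerSeriesOnBall f q 0 ⊤ := hf.hasFPowerSeriesOnBall 0 one_pos
  set C' := max C 0 with hC'def
  have hC' : 0 ≤ C' := le_max_right _ _
  have key : ∀ n : ℕ, M < n → q n = 0 := by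
    intro n hn
    have hnorm : ∀ R : ℝ, max R₀ 1 ≤ R → ‖q n‖ ≤ C' / R := by
      intro R hR
      have hR1 : (1:ℝ) ≤ R := le_trans (le_max_right _ _) hR
      have hR0 : (0:ℝ) < R := lt_of_lt_of_le one_pos hR1
      set Rn : NNReal := ⟨R, hR0.le⟩ with hRn
      have hRn0 : 0 < Rn := by
        rw [← NNReal.coe_lt_coe]; exact hR0
      have HR : HasFPowerSeriesOnBall f (cauchyPowerSeries f 0 Rn) 0 ⊤ :=
        hf.hasFPowerSeriesOnBall 0 hRn0
      have heq : cauchyPowerSeries f 0 Rn = q :=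
        HR.hasFPowerSeriesAt.eq_formalMultilinearSeries H1.hasFPowerSeriesAt
      have h1 : ‖q n‖ ≤ ((2 * π)⁻¹ * ∫ θ : ℝ in (0)..2 * π, ‖f (circleMap 0 Rn θ)‖)
          * |(Rn : ℝ)|⁻¹ ^ n := heq ▸ norm_cauchyPowerSeries_le f 0 Rn n
      have hcoe : (Rn : ℝ) = R := rfl
      rw [hcoe, abs_of_pos hR0] at h1
      have hint : (∫ θ : ℝ in (0)..2 * π, ‖f (circleMap 0 R θ)‖) ≤ 2 * π * (C' * R ^ M) := by
        have hmono : (∫ θ : ℝ in (0)..2 * π, ‖f (circleMap 0 R θ)‖)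
            ≤ ∫ _θ : ℝ in (0)..2 * π, C' * R ^ M := by
          apply intervalIntegral.integral_mono_on Real.two_pi_pos.le
          · exact ((hf.continuous.comp (continuous_circleMap 0 R)).norm).intervalIntegrable _ _
          · exact intervalIntegrable_const
          · intro θ _
            have hcm : ‖circleMap 0 R θ‖ = R := by
              simp [norm_circleMap_zero, abs_of_pos hR0]
            have := hb (circleMap 0 R θ) (by rw [hcm]; exact le_trans (le_max_left _ _) hR)
            rw [hcm] at this
            exact le_trans this (by
              apply mul_le_mul_of_nonneg_right (le_max_left _ _) (pow_nonneg hR0.le _))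
        calc (∫ θ : ℝ in (0)..2 * π, ‖f (circleMap 0 R θ)‖) ≤ _ := hmono
          _ = 2 * π * (C' * R ^ M) := by
            rw [intervalIntegral.integral_const, smul_eq_mul, sub_zero]
      have h2 : ‖q n‖ ≤ C' * R ^ M * (R⁻¹) ^ n := by
        refine le_trans h1 ?_
        apply mul_le_mul_of_nonneg_right _ (pow_nonneg (inv_nonneg.mpr hR0.le) n)
        calc (2 * π)⁻¹ * ∫ θ : ℝ in (0)..2 * π, ‖f (circleMap 0 R θ)‖
            ≤ (2 * π)⁻¹ * (2 * π * (C' * R ^ M)) := by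
              apply mul_le_mul_of_nonneg_left hint (inv_nonneg.mpr Real.two_pi_pos.le)
          _ = C' * R ^ M := by
              field_simp
      refine le_trans h2 ?_
      -- C' * R^M * (R⁻¹)^n ≤ C'/R
      have hRMn : R ^ M * (R⁻¹) ^ n ≤ R⁻¹ := by
        have hinv0 : (0:ℝ) ≤ R⁻¹ := inv_nonneg.mpr hR0.le
        have hinv1 : R⁻¹ ≤ 1 := inv_le_one_of_one_le₀ hR1
        have h3 : (R⁻¹) ^ n ≤ (R⁻¹) ^ (M + 1) := pow_le_pow_of_le_one hinv0 hinv1 hn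
        have h4 : R ^ M * (R⁻¹) ^ (M + 1) = R⁻¹ := by
          rw [pow_succ, ← mul_assoc, ← mul_pow, mul_inv_cancel₀ hR0.ne', one_pow, one_mul]
        calc R ^ M * (R⁻¹) ^ n ≤ R ^ M * (R⁻¹) ^ (M + 1) :=
              mul_le_mul_of_nonneg_left h3 (pow_nonneg hR0.le M)
          _ = R⁻¹ := h4
      calc C' * R ^ M * (R⁻¹) ^ n = C' * (R ^ M * (R⁻¹) ^ n) := by ring
        _ ≤ C' * R⁻¹ := mul_le_mul_of_nonneg_left hRMn hC'
        _ = C' / R := by rw [div_eq_mul_inv]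
    -- conclude
    have hten : Tendsto (fun R : ℝ => C' / R) atTop (nhds 0) :=
      tendsto_const_nhds.div_atTop tendsto_id
    have : ‖q n‖ ≤ 0 := by
      refine ge_of_tendsto hten ?_
      filter_upwards [eventually_ge_atTop (max R₀ 1)] with R hR using hnorm R hR
    have hz : ‖q n‖ = 0 := le_antisymm this (norm_nonneg _)
    exact norm_eq_zero.mp hz
  refine ⟨∑ n ∈ Finset.range (M + 1), Polynomial.C (q.coeff n) * Polynomial.X ^ n, ?_⟩
  intro z
  have hz : z ∈ Metric.eball (0:ℂ) ⊤ := by simp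
  have hsum := H1.hasSum hz
  rw [zero_add] at hsum
  have hfin : HasSum (fun n => q n fun _ => z)
      (∑ n ∈ Finset.range (M + 1), (q n fun _ => z)) := by
    apply hasSum_sum_of_ne_finset_zero
    intro n hn
    rw [Finset.mem_range, not_lt] at hn
    rw [key n (Nat.lt_of_succ_le hn)]
    simp
  rw [hsum.unique hfin]
  rw [Polynomial.eval_finset_sum]
  apply Finset.sum_congr rfl
  intro n _
  rw [FormalMultilinearSeries.apply_eq_pow_smul_coeff, smul_eq_mul,
    Polynomial.eval_mul, Polynomial.eval_C, Polynomial.eval_pow, Polynomial.eval_X, mul_comm]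


lemma comp_injective {D : Polynomial ℂ} (hD : D.natDegree ≠ 0) :
    Function.Injective (Polynomial.aeval D : Polynomial ℂ →ₐ[ℂ] Polynomial ℂ) := by
  have hcomp : ∀ p : Polynomial ℂ, Polynomial.aeval D p = p.comp D := by
    intro p
    rw [Polynomial.comp, Polynomial.aeval_def, Polynomial.algebraMap_eq]
  refine (injective_iff_map_eq_zero _).mpr ?_
  intro p hp
  by_contra hp0
  rw [hcomp] at hp
  have hlc : (p.comp D).leadingCoeff = p.leadingCoeff * D.leadingCoeff ^ p.natDegree :=
    Polynomial.leadingCoeff_comp hD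
  have hD0 : D ≠ 0 := fun h => hD (by rw [h]; simp)
  have : (p.comp D).leadingCoeff ≠ 0 := by
    rw [hlc]
    exact mul_ne_zero (Polynomial.leadingCoeff_ne_zero.mpr hp0)
      (pow_ne_zero _ (Polynomial.leadingCoeff_ne_zero.mpr hD0))
  exact this (by rw [hp]; simp)


noncomputable section
variable (D : Polynomial ℂ)

def psiH : MvPolynomial (Fin 2) ℂ →ₐ[ℂ] MvPolynomial (Fin 2) ℂ :=
  MvPolynomial.aeval ![MvPolynomial.X 0, MvPolynomial.X 0 - MvPolynomial.X 1]

def e1H : MvPolynomial (Fin 1) ℂ ≃ₐ[ℂ] Polynomial ℂ :=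
  (MvPolynomial.finSuccEquiv ℂ 0).trans
    (Polynomial.mapAlgEquiv (MvPolynomial.isEmptyAlgEquiv ℂ (Fin 0)))

def bigH : MvPolynomial (Fin 2) ℂ ≃ₐ[ℂ] Polynomial (Polynomial ℂ) :=
  (MvPolynomial.finSuccEquiv ℂ 1).trans (Polynomial.mapAlgEquiv e1H)

def thetaH : MvPolynomial (Fin 2) ℂ →ₐ[ℂ] Polynomial (Polynomial ℂ) :=
  (Polynomial.mapAlgHom (Polynomial.aeval D)).comp ((bigH).toAlgHom.comp psiH)

lemma psiH_psiH (r : MvPolynomial (Fin 2) ℂ) : psiH (psiH r) = r := by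
  have h : psiH.comp psiH = AlgHom.id ℂ _ := by
    apply MvPolynomial.algHom_ext
    intro i
    fin_cases i <;> simp [psiH]
  calc psiH (psiH r) = (psiH.comp psiH) r := rfl
    _ = r := by rw [h]; rfl

lemma thetaH_X0 : thetaH D (MvPolynomial.X 0) = Polynomial.X := by
  simp [thetaH, psiH, bigH, e1H, MvPolynomial.finSuccEquiv_X_zero]

lemma e1H_X0 : e1H (MvPolynomial.X 0) = Polynomial.X := by
  simp [e1H, MvPolynomial.finSuccEquiv_X_zero]

lemma bigH_X0 : bigH (MvPolynomial.X 0) = Polynomial.X := by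
  simp [bigH, MvPolynomial.finSuccEquiv_X_zero]

lemma bigH_X1 : bigH (MvPolynomial.X 1) = Polynomial.C Polynomial.X := by
  have h1 : (MvPolynomial.X (R := ℂ) (1 : Fin 2)) = MvPolynomial.X (Fin.succ 0) := rfl
  rw [bigH, AlgEquiv.trans_apply, h1, MvPolynomial.finSuccEquiv_X_succ]
  show Polynomial.map _ _ = _
  rw [Polynomial.map_C]
  exact congrArg Polynomial.C e1H_X0

lemma psiH_X1 : psiH (MvPolynomial.X 1) = MvPolynomial.X 0 - MvPolynomial.X 1 := by
  simp [psiH]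

lemma thetaH_X1 : thetaH D (MvPolynomial.X 1) = Polynomial.X - Polynomial.C D := by
  rw [thetaH, AlgHom.comp_apply, AlgHom.comp_apply, psiH_X1, map_sub,
    AlgEquiv.toAlgHom_eq_coe, AlgEquiv.coe_toAlgHom, bigH_X0, bigH_X1, map_sub,
    Polynomial.coe_mapAlgHom, Polynomial.map_X, Polynomial.map_C]
  simp

lemma thetaH_injective (hD : D.natDegree ≠ 0) : Function.Injective (thetaH D) := by
  have h1 : Function.Injective (psiH : MvPolynomial (Fin 2) ℂ → MvPolynomial (Fin 2) ℂ) :=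
    Function.LeftInverse.injective psiH_psiH
  have h2 : Function.Injective (bigH : MvPolynomial (Fin 2) ℂ → Polynomial (Polynomial ℂ)) :=
    bigH.injective
  have h3 : Function.Injective (Polynomial.map
      ((Polynomial.aeval D : Polynomial ℂ →ₐ[ℂ] Polynomial ℂ) :
        Polynomial ℂ →+* Polynomial ℂ)) :=
    Polynomial.map_injective _ (comp_injective hD)
  intro a b hab
  apply h1; apply h2; apply h3
  simpa [thetaH, Polynomial.coe_mapAlgHom] using hab
end


theorem stmt_18' (f : ℂ → ℂ) (hf : Differentiable ℂ f ∧ ¬ ∃ p : Polynomial ℂ, ∀ z, f z = p.eval z)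
    (P Q : Polynomial ℂ) (hPQ : 0 < (P - Q).natDegree) :
    ∀ R : MvPolynomial (Fin 2) ℂ,
      (∀ z, MvPolynomial.eval
        (fun i => ![fun z => f z + P.eval z, fun z => f z + Q.eval z] i z) R = 0) → R = 0 := by
  obtain ⟨hdf, hnp⟩ := hf
  intro R hR
  by_contra hR0
  set D : Polynomial ℂ := P - Q with hDdef
  have hD : D.natDegree ≠ 0 := hPQ.ne'
  set g : ℂ → ℂ := fun z => f z + P.eval z with hgdef
  set S : Polynomial (Polynomial ℂ) := thetaH D R with hSdef
  have hS0 : S ≠ 0 := fun h => hR0 (thetaH_injective D hD (by rw [map_zero, ← hSdef, h]))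
  have hEval : ∀ z : ℂ, Polynomial.eval₂ (Polynomial.evalRingHom z) (g z) S = 0 := by
    intro z
    have hcomp : ∀ u : MvPolynomial (Fin 2) ℂ,
        Polynomial.eval₂ (Polynomial.evalRingHom z) (g z) (thetaH D u)
          = MvPolynomial.eval
              (fun i => ![fun z => f z + P.eval z, fun z => f z + Q.eval z] i z) u := by
      intro u
      induction u using MvPolynomial.induction_on with
      | C a =>
          rw [MvPolynomial.eval_C]
          have h1 : thetaH D (MvPolynomial.C a) = Polynomial.C (Polynomial.C a) := by
            rw [show (MvPolynomial.C a : MvPolynomial (Fin 2) ℂ)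
                = algebraMap ℂ (MvPolynomial (Fin 2) ℂ) a from rfl, AlgHom.commutes]
            rfl
          rw [h1, Polynomial.eval₂_C]
          simp
      | add p q hp hq => rw [map_add, Polynomial.eval₂_add, map_add, hp, hq]
      | mul_X p i hp =>
          rw [map_mul, Polynomial.eval₂_mul, map_mul, hp]
          refine congrArg (_ * ·) ?_
          fin_cases i
          · show Polynomial.eval₂ (Polynomial.evalRingHom z) (g z) (thetaH D (MvPolynomial.X 0))
              = MvPolynomial.eval
                  (fun i => ![fun z => f z + P.eval z, fun z => f z + Q.eval z] i z)
                  (MvPolynomial.X 0)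
            rw [thetaH_X0, Polynomial.eval₂_X, MvPolynomial.eval_X]
            simp [hgdef]
          · show Polynomial.eval₂ (Polynomial.evalRingHom z) (g z) (thetaH D (MvPolynomial.X 1))
              = MvPolynomial.eval
                  (fun i => ![fun z => f z + P.eval z, fun z => f z + Q.eval z] i z)
                  (MvPolynomial.X 1)
            rw [thetaH_X1, Polynomial.eval₂_sub, Polynomial.eval₂_X, Polynomial.eval₂_C,
              MvPolynomial.eval_X]
            simp [hgdef, hDdef, Polynomial.eval_sub]
            ring
    rw [hcomp R, hR z]
  have hlead : S.coeff S.natDegree ≠ 0 := by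
    rw [← Polynomial.leadingCoeff]
    exact Polynomial.leadingCoeff_ne_zero.mpr hS0
  rcases Nat.eq_zero_or_pos S.natDegree with hn0 | hn
  · have hz : ∀ z : ℂ, (S.coeff 0).eval z = 0 := by
      intro z
      have h := hEval z
      rw [Polynomial.eval₂_eq_sum_range, hn0] at h
      simpa using h
    have hS00 : S.coeff 0 = 0 := by
      apply Polynomial.funext; intro r; rw [hz r]; simp
    rw [hn0] at hlead
    exact hlead hS00
  · obtain ⟨m, hm⟩ : ∃ m, S.natDegree = m + 1 :=
      ⟨S.natDegree - 1, (Nat.succ_pred_eq_of_pos hn).symm⟩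
    obtain ⟨c, R₁, hc, hlb⟩ := aux_lower (S.coeff S.natDegree) hlead
    set M := Finset.sup (Finset.range (S.natDegree + 1)) (fun j => (S.coeff j).natDegree)
      with hMdef
    set K : ℕ → ℝ := fun j => ∑ i ∈ Finset.range (M + 1), ‖(S.coeff j).coeff i‖ with hKdef
    set B := ∑ j ∈ Finset.range S.natDegree, K j with hBdef
    have hK0 : ∀ j, 0 ≤ K j := fun j => Finset.sum_nonneg fun i _ => norm_nonneg _
    have hB0 : 0 ≤ B := Finset.sum_nonneg fun j _ => hK0 j
    have hgrow : ∀ z : ℂ, max R₁ 1 ≤ ‖z‖ → ‖g z‖ ≤ (1 + B / c) * ‖z‖ ^ M := by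
      intro z hz
      have hz1 : 1 ≤ ‖z‖ := le_trans (le_max_right _ _) hz
      have hzR : R₁ ≤ ‖z‖ := le_trans (le_max_left _ _) hz
      have hzM : 1 ≤ ‖z‖ ^ M := one_le_pow₀ hz1
      have hCC1 : 1 ≤ 1 + B / c := le_add_of_nonneg_right (div_nonneg hB0 hc.le)
      rcases le_or_gt ‖g z‖ 1 with hgle | hgt
      · calc ‖g z‖ ≤ 1 := hgle
          _ ≤ (1 + B / c) * ‖z‖ ^ M := by nlinarith
      · have hx0 : (0:ℝ) < ‖g z‖ := lt_trans one_pos hgt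
        have heq := hEval z
        rw [Polynomial.eval₂_eq_sum_range, Finset.sum_range_succ] at heq
        have hiso := eq_neg_of_add_eq_zero_right heq
        have hnorm1 : ‖(S.coeff S.natDegree).eval z‖ * ‖g z‖ ^ S.natDegree
            ≤ ∑ j ∈ Finset.range S.natDegree, ‖(S.coeff j).eval z‖ * ‖g z‖ ^ j := by
          calc ‖(S.coeff S.natDegree).eval z‖ * ‖g z‖ ^ S.natDegree
              = ‖(Polynomial.evalRingHom z) (S.coeff S.natDegree) * g z ^ S.natDegree‖ := by
                rw [norm_mul, norm_pow]; simp
            _ = ‖∑ j ∈ Finset.range S.natDegree,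
                  (Polynomial.evalRingHom z) (S.coeff j) * g z ^ j‖ := by
                rw [hiso, norm_neg]
            _ ≤ ∑ j ∈ Finset.range S.natDegree,
                  ‖(Polynomial.evalRingHom z) (S.coeff j) * g z ^ j‖ := norm_sum_le _ _
            _ = ∑ j ∈ Finset.range S.natDegree, ‖(S.coeff j).eval z‖ * ‖g z‖ ^ j := by
                apply Finset.sum_congr rfl
                intro j _
                rw [norm_mul, norm_pow]; simp
        have hbound : ∀ j ∈ Finset.range S.natDegree,
            ‖(S.coeff j).eval z‖ * ‖g z‖ ^ j ≤ K j * ‖z‖ ^ M * ‖g z‖ ^ m := by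
          intro j hj
          have hjm : j ≤ m := by have h := Finset.mem_range.mp hj; omega
          have hju : (S.coeff j).natDegree ≤ M := by
            rw [hMdef]
            exact Finset.le_sup (f := fun j => (S.coeff j).natDegree)
              (Finset.mem_range.mpr (by have h := Finset.mem_range.mp hj; omega))
          have h1 : ‖(S.coeff j).eval z‖ ≤ K j * ‖z‖ ^ M := aux_upper _ hju hz1
          have h2 : ‖g z‖ ^ j ≤ ‖g z‖ ^ m := pow_le_pow_right₀ hgt.le hjm
          exact mul_le_mul h1 h2 (pow_nonneg hx0.le _)
            (mul_nonneg (hK0 j) (pow_nonneg (norm_nonneg z) M))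
        have hsum2 : ∑ j ∈ Finset.range S.natDegree, ‖(S.coeff j).eval z‖ * ‖g z‖ ^ j
            ≤ B * ‖z‖ ^ M * ‖g z‖ ^ m := by
          calc ∑ j ∈ Finset.range S.natDegree, ‖(S.coeff j).eval z‖ * ‖g z‖ ^ j
              ≤ ∑ j ∈ Finset.range S.natDegree, K j * ‖z‖ ^ M * ‖g z‖ ^ m :=
                Finset.sum_le_sum hbound
            _ = B * ‖z‖ ^ M * ‖g z‖ ^ m := by
                rw [hBdef, Finset.sum_mul, Finset.sum_mul]
        have hlow : c * ‖g z‖ ^ S.natDegree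
            ≤ ‖(S.coeff S.natDegree).eval z‖ * ‖g z‖ ^ S.natDegree :=
          mul_le_mul_of_nonneg_right (hlb z hzR) (pow_nonneg hx0.le _)
        have hfin : c * ‖g z‖ ≤ B * ‖z‖ ^ M := by
          have h5 : c * ‖g z‖ * ‖g z‖ ^ m ≤ (B * ‖z‖ ^ M) * ‖g z‖ ^ m := by
            calc c * ‖g z‖ * ‖g z‖ ^ m = c * ‖g z‖ ^ (m + 1) := by
                  rw [mul_assoc, mul_comm (‖g z‖) (‖g z‖ ^ m), ← pow_succ]
              _ = c * ‖g z‖ ^ S.natDegree := by rw [hm]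
              _ ≤ ‖(S.coeff S.natDegree).eval z‖ * ‖g z‖ ^ S.natDegree := hlow
              _ ≤ ∑ j ∈ Finset.range S.natDegree, ‖(S.coeff j).eval z‖ * ‖g z‖ ^ j := hnorm1
              _ ≤ B * ‖z‖ ^ M * ‖g z‖ ^ m := hsum2
          exact le_of_mul_le_mul_right h5 (pow_pos hx0 m)
        have hxle : ‖g z‖ ≤ B / c * ‖z‖ ^ M := by
          rw [div_mul_eq_mul_div, le_div_iff₀ hc]
          nlinarith
        calc ‖g z‖ ≤ B / c * ‖z‖ ^ M := hxle
          _ ≤ (1 + B / c) * ‖z‖ ^ M := by nlinarith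
    have hgd : Differentiable ℂ g := hdf.add (Polynomial.differentiable P)
    obtain ⟨p, hp⟩ := entire_poly_growth hgd (1 + B / c) (max R₁ 1) M hgrow
    apply hnp
    refine ⟨p - P, fun z => ?_⟩
    rw [Polynomial.eval_sub]
    exact eq_sub_of_add_eq (hp z)

end StmtAux

set_option maxHeartbeats 1000000 in
/-- Lemma 3.7: if `f` is transcendental entire and `P, Q` are polynomials with `P − Q`
nonconstant, then `f + P` and `f + Q` are algebraically independent over `ℂ`. -/
theorem stmt_18 (f : ℂ → ℂ) (hf : TranscEntire f) (P Q : Polynomial ℂ)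
    (hPQ : 0 < (P - Q).natDegree) :
    AlgIndepFns ![fun z => f z + P.eval z, fun z => f z + Q.eval z] := by
  intro R hR
  exact stmt_18' f hf P Q hPQ R hR
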